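/- On a PX board containing at least one PX weak three and no PX or PY simple fours, PX has a winning strategy: by playing the trigger of the weak three PX creates two simple fours with disjoint trigger squares, and PY, having no simple four of his own, cannot block both. -/
import Mathlib


/- # A formal model of Gomoku patterns and restricted games -/

abbrev Square := ℤ × ℤ

inductive Cell
  | px | py | empty
deriving DecidableEq

/-- A pattern: a finite set of board squares together with their contents. -/
structure Pattern where
  dom : Finset Square
  val : Square → Cell

def Pattern.emptySquares (p : Pattern) : Finset Square :=
  p.dom.filter (fun s => p.val s = Cell.empty)

/-- Fill (or empty) a square of the pattern with the given content. -/
def Pattern.fill (p : Pattern) (s : Square) (c : Cell) : Pattern :=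
  ⟨p.dom, fun t => if t = s then c else p.val t⟩

/-- Remove a square from the pattern. -/
def Pattern.erase (p : Pattern) (s : Square) : Pattern :=
  ⟨p.dom.erase s, p.val⟩

/-- A PX pattern contains no PY stones. -/
def Pattern.isPX (p : Pattern) : Prop :=
  ∀ s ∈ p.dom, p.val s ≠ Cell.py

/-- The four alignment directions. -/
def dirs : List Square := [(1, 0), (0, 1), (1, 1), (1, -1)]

def shift (s d : Square) (i : ℕ) : Square :=
  (s.1 + (i : ℤ) * d.1, s.2 + (i : ℤ) * d.2)

/-- A block: five aligned consecutive squares starting at `s` in direction `d`. -/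
def blockSquares (s d : Square) : Finset Square :=
  (Finset.range 5).image (fun i => shift s d i)

/-- A line: nine aligned consecutive squares. -/
def lineSquares (s d : Square) : Finset Square :=
  (Finset.range 9).image (fun i => shift s d i)

def lineCenter (s d : Square) : Square := shift s d 4

/-- Five aligned consecutive stones of colour `c` inside the pattern. -/
def hasFive (p : Pattern) (c : Cell) : Prop :=
  ∃ s d, d ∈ dirs ∧ blockSquares s d ⊆ p.dom ∧ ∀ t ∈ blockSquares s d, p.val t = c

/-- `winsIn b n p`: in the game restricted to `p`, with PX to move iff `b`,
PX (playing optimally) forces a five-in-a-row within `n` further plies,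
against any play of PY. -/
def winsIn : Bool → ℕ → Pattern → Prop
  | _, 0, p => hasFive p Cell.px
  | true, n + 1, p =>
      hasFive p Cell.px ∨ (¬ hasFive p Cell.py ∧
        ∃ s ∈ p.emptySquares, winsIn false n (p.fill s Cell.px))
  | false, n + 1, p =>
      hasFive p Cell.px ∨ (¬ hasFive p Cell.py ∧ p.emptySquares.Nonempty ∧
        ∀ s ∈ p.emptySquares, winsIn true n (p.fill s Cell.py))

/-- PX wins the restricted game moving first. -/
def pxWinsFirst (p : Pattern) : Prop := ∃ n, winsIn true n p

/-- PX wins the restricted game moving second. -/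
def pxWinsSecond (p : Pattern) : Prop := ∃ n, winsIn false n p

/-- A PX victory: a PX pattern where PX wins moving first or second. -/
def isVictory (p : Pattern) : Prop := p.isPX ∧ pxWinsFirst p ∧ pxWinsSecond p

/-- A victory of `n` steps: PX, moving second, wins placing `n` stones
(i.e. within `2*n` plies) and no fewer. -/
def victorySteps (p : Pattern) (n : ℕ) : Prop :=
  isVictory p ∧ winsIn false (2 * n) p ∧ ∀ m < n, ¬ winsIn false (2 * m) p

/-- A trigger of a pattern: an empty square whose filling by PX yields a PX victory. -/
def isTrigger (p : Pattern) (s : Square) : Prop :=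
  s ∈ p.emptySquares ∧ isVictory (p.fill s Cell.px)

/-- A PX attack: a PX pattern, not a victory, with a trigger. -/
def isAttack (p : Pattern) : Prop :=
  p.isPX ∧ ¬ isVictory p ∧ ∃ s, isTrigger p s

/-- An attack of `n` steps: `n` is one plus the steps of the fastest victory
reachable by playing a trigger. -/
def attackSteps (p : Pattern) (n : ℕ) : Prop :=
  isAttack p ∧ 1 ≤ n ∧
  (∃ s, isTrigger p s ∧ victorySteps (p.fill s Cell.px) (n - 1)) ∧
  (∀ s m, isTrigger p s → victorySteps (p.fill s Cell.px) m → n - 1 ≤ m)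

/-- A PX threat: a PX pattern, neither victory nor attack, with an empty square
whose filling by PX yields a PX attack. -/
def isThreat (p : Pattern) : Prop :=
  p.isPX ∧ ¬ isVictory p ∧ ¬ isAttack p ∧
  ∃ s ∈ p.emptySquares, isAttack (p.fill s Cell.px)

/-- A threat of `n` steps: one plus the steps of the fastest reachable attack. -/
def threatSteps (p : Pattern) (n : ℕ) : Prop :=
  isThreat p ∧ 2 ≤ n ∧
  (∃ s ∈ p.emptySquares, attackSteps (p.fill s Cell.px) (n - 1)) ∧
  (∀ s ∈ p.emptySquares, ∀ m, attackSteps (p.fill s Cell.px) m → n - 1 ≤ m)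

/-- `q` is a sub-pattern of `p`. -/
def SubPattern (q p : Pattern) : Prop :=
  q.dom ⊆ p.dom ∧ ∀ s ∈ q.dom, q.val s = p.val s

/-- Two patterns are compatible if they agree on common squares. -/
def Compatible (p q : Pattern) : Prop :=
  ∀ s ∈ p.dom ∩ q.dom, p.val s = q.val s

/-- Union of two (compatible) patterns. -/
def Pattern.union (p q : Pattern) : Pattern :=
  ⟨p.dom ∪ q.dom, fun s => if s ∈ p.dom then p.val s else q.val s⟩

open Classical in
/-- The defence of an attack: the empty squares where PY, moving first in the
restricted game, can play to stop PX from winning. -/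
noncomputable def Defence (p : Pattern) : Finset Square :=
  p.emptySquares.filter (fun s => ¬ pxWinsFirst (p.fill s Cell.py))

/-- A simple five as a relative pattern: exactly one block, all PX stones. -/
def isS5Pattern (q : Pattern) : Prop :=
  ∃ s d, d ∈ dirs ∧ q.dom = blockSquares s d ∧ ∀ t ∈ q.dom, q.val t = Cell.px

/-- A simple four as a relative pattern: one block, four PX stones, one empty. -/
def isS4Pattern (q : Pattern) : Prop :=
  ∃ s d, d ∈ dirs ∧ q.dom = blockSquares s d ∧
    (q.dom.filter (fun t => q.val t = Cell.px)).card = 4 ∧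
    (q.dom.filter (fun t => q.val t = Cell.empty)).card = 1

/-- A simple three as a relative pattern: one block, three PX stones, two empty. -/
def isS3Pattern (q : Pattern) : Prop :=
  ∃ s d, d ∈ dirs ∧ q.dom = blockSquares s d ∧
    (q.dom.filter (fun t => q.val t = Cell.px)).card = 3 ∧
    (q.dom.filter (fun t => q.val t = Cell.empty)).card = 2

/-- A PX block of degree 4 on the board `p`: a block inside `p` with no PY
stones and exactly four PX stones. -/
def isPXBlock4 (p : Pattern) (t d : Square) : Prop :=
  blockSquares t d ⊆ p.dom ∧ (∀ u ∈ blockSquares t d, p.val u ≠ Cell.py) ∧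
  ((blockSquares t d).filter (fun u => p.val u = Cell.px)).card = 4

/-- A simple four for colour `c` on board `p`: a block inside `p` with four
stones of colour `c` and a single empty (trigger) square `g`. -/
def isSimpleFourBlock (p : Pattern) (c : Cell) (t d g : Square) : Prop :=
  d ∈ dirs ∧ blockSquares t d ⊆ p.dom ∧ g ∈ blockSquares t d ∧
  p.val g = Cell.empty ∧ ∀ u ∈ blockSquares t d, u ≠ g → p.val u = c

/-- A simple three for PX on board `p`: a block inside `p` with three PX
stones, two empty squares and no PY stones. -/
def isSimpleThreeBlock (p : Pattern) (t d : Square) : Prop :=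
  d ∈ dirs ∧ blockSquares t d ⊆ p.dom ∧ (∀ u ∈ blockSquares t d, p.val u ≠ Cell.py) ∧
  ((blockSquares t d).filter (fun u => p.val u = Cell.px)).card = 3 ∧
  ((blockSquares t d).filter (fun u => p.val u = Cell.empty)).card = 2

/-- The tracker vector of two blocks `A`, `B`: at each square, the number of
blocks among `A`, `B` in which that square is empty. -/
def tracker (p : Pattern) (A B : Finset Square) (t : Square) : ℕ :=
  (if t ∈ A ∧ p.val t = Cell.empty then 1 else 0) +
  (if t ∈ B ∧ p.val t = Cell.empty then 1 else 0)

/-- The pattern `+XXXX+`: six aligned consecutive squares, four PX stones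
flanked by two empty squares. -/
def d4pat : Pattern :=
  ⟨(Finset.range 6).image (fun i : ℕ => ((i : ℤ), (0 : ℤ))),
   fun s => if s = ((0 : ℤ), (0 : ℤ)) ∨ s = ((5 : ℤ), (0 : ℤ)) then Cell.empty else Cell.px⟩

/-- The pattern `XXXX+`: four aligned consecutive PX stones followed by one
empty square. -/
def s4pat : Pattern :=
  ⟨(Finset.range 5).image (fun i : ℕ => ((i : ℤ), (0 : ℤ))),
   fun s => if s = ((4 : ℤ), (0 : ℤ)) then Cell.empty else Cell.px⟩

lemma fill_val_ne (p : Pattern) {t s : Square} (c : Cell) (h : t ≠ s) :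
    (p.fill s c).val t = p.val t := if_neg h

lemma fill_val_self (p : Pattern) (s : Square) (c : Cell) :
    (p.fill s c).val s = c := if_pos rfl

/-- Filling with a PX stone cannot create a PY five. -/
lemma no_py_five_fill_px (p : Pattern) (s : Square) (h : ¬ hasFive p Cell.py) :
    ¬ hasFive (p.fill s Cell.px) Cell.py := by
  rintro ⟨a, d, hd, hsub, hall⟩
  refine h ⟨a, d, hd, hsub, fun u hu => ?_⟩
  have := hall u hu
  by_cases hus : u = s
  · rw [hus, fill_val_self] at this; exact absurd this (by simp)
  · rwa [fill_val_ne p Cell.px hus] at this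

/-- Filling with a PX stone cannot create a PY simple four. -/
lemma no_py_four_fill_px (p : Pattern) (s : Square)
    (h : ¬ ∃ t d g : Square, isSimpleFourBlock p Cell.py t d g) :
    ¬ ∃ t d g : Square, isSimpleFourBlock (p.fill s Cell.px) Cell.py t d g := by
  rintro ⟨t, d, g, hd, hsub, hg, hge, hall⟩
  have hgs : g ≠ s := by
    intro hgs; rw [hgs, fill_val_self] at hge; exact absurd hge (by simp)
  refine h ⟨t, d, g, hd, hsub, hg, ?_, fun u hu hug => ?_⟩
  · rwa [fill_val_ne p Cell.px hgs] at hge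
  · have := hall u hu hug
    by_cases hus : u = s
    · rw [hus, fill_val_self] at this; exact absurd this (by simp)
    · rwa [fill_val_ne p Cell.px hus] at this

/-- If PY has no five and no simple four, PY cannot create a five in one move. -/
lemma py_move_no_five (q : Pattern) (h5 : ¬ hasFive q Cell.py)
    (h4 : ¬ ∃ t d g : Square, isSimpleFourBlock q Cell.py t d g)
    (s : Square) (hs : q.val s = Cell.empty) :
    ¬ hasFive (q.fill s Cell.py) Cell.py := by
  rintro ⟨a, d, hd, hsub, hall⟩
  by_cases hsin : s ∈ blockSquares a d
  · refine h4 ⟨a, d, s, hd, hsub, hsin, hs, fun u hu hus => ?_⟩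
    have := hall u hu
    rwa [fill_val_ne q Cell.py hus] at this
  · refine h5 ⟨a, d, hd, hsub, fun u hu => ?_⟩
    have := hall u hu
    rwa [fill_val_ne q Cell.py (fun h : u = s => hsin (h ▸ hu))] at this

/-- A PX simple four survives a PY move elsewhere than its trigger. -/
lemma four_persists (q : Pattern) (t d g s : Square)
    (h : isSimpleFourBlock q Cell.px t d g) (hs : q.val s = Cell.empty) (hsg : s ≠ g) :
    isSimpleFourBlock (q.fill s Cell.py) Cell.px t d g := by
  obtain ⟨hd, hsub, hg, hge, hall⟩ := h
  refine ⟨hd, hsub, hg, ?_, fun u hu hug => ?_⟩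
  · rw [fill_val_ne q Cell.py (Ne.symm hsg)]; exact hge
  · have hx := hall u hu hug
    have hus : u ≠ s := fun h => by rw [h, hs] at hx; exact absurd hx (by simp)
    rw [fill_val_ne q Cell.py hus]; exact hx

/-- Filling the trigger of a PX simple four yields a PX five. -/
lemma four_fill_five (q : Pattern) (t d g : Square)
    (h : isSimpleFourBlock q Cell.px t d g) :
    hasFive (q.fill g Cell.px) Cell.px := by
  obtain ⟨hd, hsub, hg, _, hall⟩ := h
  refine ⟨t, d, hd, hsub, fun u hu => ?_⟩
  by_cases hug : u = g
  · rw [hug, fill_val_self]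
  · rw [fill_val_ne q Cell.px hug]; exact hall u hu hug

/-- Filling one of the two empty squares of a simple three gives a simple four. -/
lemma three_to_four (p : Pattern) (t d γ g : Square)
    (h : isSimpleThreeBlock p t d) (hγ : γ ∈ blockSquares t d) (hg : g ∈ blockSquares t d)
    (hγe : p.val γ = Cell.empty) (hge : p.val g = Cell.empty) (hne : γ ≠ g) :
    isSimpleFourBlock (p.fill γ Cell.px) Cell.px t d g := by
  obtain ⟨hd, hsub, hnpy, _, hcard2⟩ := h
  have hE : ({γ, g} : Finset Square) ⊆
      (blockSquares t d).filter (fun u => p.val u = Cell.empty) := by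
    intro u hu
    rcases Finset.mem_insert.mp hu with rfl | hu
    · exact Finset.mem_filter.mpr ⟨hγ, hγe⟩
    · rw [Finset.mem_singleton] at hu
      exact Finset.mem_filter.mpr ⟨hu ▸ hg, hu ▸ hge⟩
  have hEeq : (blockSquares t d).filter (fun u => p.val u = Cell.empty)
      = ({γ, g} : Finset Square) := by
    refine (Finset.eq_of_subset_of_card_le hE ?_).symm
    rw [hcard2, Finset.card_insert_of_notMem (by simpa using hne), Finset.card_singleton]
  refine ⟨hd, hsub, hg, ?_, fun u hu hug => ?_⟩
  · rw [fill_val_ne p Cell.px (Ne.symm hne)]; exact hge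
  · by_cases huγ : u = γ
    · rw [huγ, fill_val_self]
    · rw [fill_val_ne p Cell.px huγ]
      cases hc : p.val u with
      | px => rfl
      | py => exact absurd hc (hnpy u hu)
      | empty =>
        have : u ∈ ({γ, g} : Finset Square) := by
          rw [← hEeq]; exact Finset.mem_filter.mpr ⟨hu, hc⟩
        rcases Finset.mem_insert.mp this with h' | h'
        · exact absurd h' huγ
        · exact absurd (Finset.mem_singleton.mp h') hug

/-- On a PX board containing a PX weak three (two simple threes
intersecting in exactly one empty square γ) and no PX or PY simple four, PX has
a winning strategy: playing γ creates two PX simple fours with distinct trigger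
squares, which PY cannot both block. -/
theorem stmt19 (p : Pattern)
    (hpx : ¬ hasFive p Cell.px) (hpy : ¬ hasFive p Cell.py)
    (t₁ d₁ t₂ d₂ γ : Square)
    (h₁ : isSimpleThreeBlock p t₁ d₁) (h₂ : isSimpleThreeBlock p t₂ d₂)
    (hint : (blockSquares t₁ d₁ ∩ blockSquares t₂ d₂).filter
        (fun u => p.val u = Cell.empty) = {γ})
    (hnoX : ¬ ∃ t d g : Square, isSimpleFourBlock p Cell.px t d g)
    (hnoY : ¬ ∃ t d g : Square, isSimpleFourBlock p Cell.py t d g) :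
    pxWinsFirst p ∧
    (∃ g₁ g₂ : Square, g₁ ≠ g₂ ∧
      isSimpleFourBlock (p.fill γ Cell.px) Cell.px t₁ d₁ g₁ ∧
      isSimpleFourBlock (p.fill γ Cell.px) Cell.px t₂ d₂ g₂) := by
  -- γ is a common empty square of the two blocks
  have hγmem : γ ∈ (blockSquares t₁ d₁ ∩ blockSquares t₂ d₂).filter
      (fun u => p.val u = Cell.empty) := by rw [hint]; exact Finset.mem_singleton_self γ
  obtain ⟨hγint, hγe⟩ := Finset.mem_filter.mp hγmem
  have hγ1 : γ ∈ blockSquares t₁ d₁ := (Finset.mem_inter.mp hγint).1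
  have hγ2 : γ ∈ blockSquares t₂ d₂ := (Finset.mem_inter.mp hγint).2
  -- extract the second empty square of each three
  have get_g : ∀ t d, isSimpleThreeBlock p t d → γ ∈ blockSquares t d →
      ∃ g, g ∈ blockSquares t d ∧ p.val g = Cell.empty ∧ g ≠ γ := by
    intro t d h hγb
    obtain ⟨_, _, _, _, hcard2⟩ := h
    have hγE : γ ∈ (blockSquares t d).filter (fun u => p.val u = Cell.empty) :=
      Finset.mem_filter.mpr ⟨hγb, hγe⟩
    obtain ⟨g, hgE, hgne⟩ := Finset.exists_mem_ne (by omega : 1 <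
      ((blockSquares t d).filter (fun u => p.val u = Cell.empty)).card) γ
    obtain ⟨hgb, hge⟩ := Finset.mem_filter.mp hgE
    exact ⟨g, hgb, hge, hgne⟩
  obtain ⟨g₁, hg₁b, hg₁e, hg₁ne⟩ := get_g t₁ d₁ h₁ hγ1
  obtain ⟨g₂, hg₂b, hg₂e, hg₂ne⟩ := get_g t₂ d₂ h₂ hγ2
  have hgg : g₁ ≠ g₂ := by
    intro h
    have : g₁ ∈ (blockSquares t₁ d₁ ∩ blockSquares t₂ d₂).filter
        (fun u => p.val u = Cell.empty) :=
      Finset.mem_filter.mpr ⟨Finset.mem_inter.mpr ⟨hg₁b, h ▸ hg₂b⟩, hg₁e⟩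
    rw [hint, Finset.mem_singleton] at this
    exact hg₁ne this
  -- the two simple fours after playing γ
  have hf₁ : isSimpleFourBlock (p.fill γ Cell.px) Cell.px t₁ d₁ g₁ :=
    three_to_four p t₁ d₁ γ g₁ h₁ hγ1 hg₁b hγe hg₁e (Ne.symm hg₁ne)
  have hf₂ : isSimpleFourBlock (p.fill γ Cell.px) Cell.px t₂ d₂ g₂ :=
    three_to_four p t₂ d₂ γ g₂ h₂ hγ2 hg₂b hγe hg₂e (Ne.symm hg₂ne)
  set q := p.fill γ Cell.px with hq
  have hq5 : ¬ hasFive q Cell.py := no_py_five_fill_px p γ hpy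
  have hq4 : ¬ ∃ t d g : Square, isSimpleFourBlock q Cell.py t d g :=
    no_py_four_fill_px p γ hnoY
  have hdom₁ : blockSquares t₁ d₁ ⊆ p.dom := h₁.2.1
  refine ⟨⟨3, ?_⟩, g₁, g₂, hgg, hf₁, hf₂⟩
  show hasFive p Cell.px ∨ (¬ hasFive p Cell.py ∧
      ∃ s ∈ p.emptySquares, winsIn false 2 (p.fill s Cell.px))
  refine Or.inr ⟨hpy, γ, Finset.mem_filter.mpr ⟨hdom₁ hγ1, hγe⟩, ?_⟩
  show hasFive q Cell.px ∨ (¬ hasFive q Cell.py ∧ q.emptySquares.Nonempty ∧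
      ∀ s ∈ q.emptySquares, winsIn true 1 (q.fill s Cell.py))
  have hqval : ∀ g : Square, p.val g = Cell.empty → g ≠ γ → q.val g = Cell.empty := by
    intro g hg hne; rw [hq]; rw [fill_val_ne p Cell.px hne]; exact hg
  have hg₁q : g₁ ∈ q.emptySquares :=
    Finset.mem_filter.mpr ⟨hdom₁ hg₁b, hqval g₁ hg₁e hg₁ne⟩
  refine Or.inr ⟨hq5, ⟨g₁, hg₁q⟩, fun s hs => ?_⟩
  obtain ⟨hsdom, hse⟩ := Finset.mem_filter.mp hs
  show hasFive (q.fill s Cell.py) Cell.px ∨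
      (¬ hasFive (q.fill s Cell.py) Cell.py ∧
        ∃ u ∈ (q.fill s Cell.py).emptySquares,
          winsIn false 0 ((q.fill s Cell.py).fill u Cell.px))
  refine Or.inr ⟨py_move_no_five q hq5 hq4 s hse, ?_⟩
  -- pick the trigger not blocked by PY
  have key : ∀ t d g, isSimpleFourBlock q Cell.px t d g → g ∈ p.dom → s ≠ g →
      ∃ u ∈ (q.fill s Cell.py).emptySquares,
        winsIn false 0 ((q.fill s Cell.py).fill u Cell.px) := by
    intro t d g hf hgdom hsg
    have hf' := four_persists q t d g s hf hse hsg
    refine ⟨g, Finset.mem_filter.mpr ⟨hgdom, ?_⟩, four_fill_five _ t d g hf'⟩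
    exact hf'.2.2.2.1
  by_cases hs1 : s = g₁
  · exact key t₂ d₂ g₂ hf₂ (h₂.2.1 hg₂b) (hs1 ▸ hgg)
  · exact key t₁ d₁ g₁ hf₁ (hdom₁ hg₁b) hs1
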